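/- Let Δ ⊆ ℝ² be the convex hull of (0,0), (1,0), (0,1), let f₁(x,y) = (x + y/2, y/2) and f₂(x,y) = (y/2, 1 − x − y/2), and let μ be the Borel probability measure on ℝ² defined by μ(B) = 2·L(B ∩ Δ), where L is two-dimensional Lebesgue measure. Then μ is an invariant measure of the probabilistic IFS with probabilities (1/2, 1/2): (1/2)·μ∘f₁⁻¹ + (1/2)·μ∘f₂⁻¹ = μ. -/

import Mathlib

open Set MeasureTheory ENNReal

/-- The Barnsley–Vince map `f₁(x,y) = (x + y/2, y/2)`. -/
noncomputable def f1 : ℝ × ℝ → ℝ × ℝ := fun v => (v.1 + v.2 / 2, v.2 / 2)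

/-- The Barnsley–Vince map `f₂(x,y) = (y/2, 1 − x − y/2)`. -/
noncomputable def f2 : ℝ × ℝ → ℝ × ℝ := fun v => (v.2 / 2, 1 - v.1 - v.2 / 2)

/-- The filled triangle with vertices `(0,0)`, `(1,0)`, `(0,1)`. -/
def Δ : Set (ℝ × ℝ) := convexHull ℝ {(0, 0), (1, 0), (0, 1)}

/-- The normalized Lebesgue measure on `Δ`: `μ(B) = 2·L(B ∩ Δ)`. -/
noncomputable def μBV : Measure (ℝ × ℝ) := (2 : ℝ≥0∞) • volume.restrict Δ

/-! ### Auxiliary material -/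

/-- Linear part of `f1` (which is in fact linear). -/
noncomputable def L1 : (ℝ × ℝ) →ₗ[ℝ] (ℝ × ℝ) where
  toFun v := (v.1 + v.2 / 2, v.2 / 2)
  map_add' a b := by ext <;> simp <;> ring
  map_smul' c a := by ext <;> simp <;> ring

/-- Linear part of `f2`. -/
noncomputable def L2 : (ℝ × ℝ) →ₗ[ℝ] (ℝ × ℝ) where
  toFun v := (v.2 / 2, -v.1 - v.2 / 2)
  map_add' a b := by ext <;> simp <;> ring
  map_smul' c a := by ext <;> simp <;> ring

lemma detL1 : LinearMap.det L1 = 1 / 2 := by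
  rw [← LinearMap.det_toMatrix (Module.Basis.finTwoProd ℝ) L1, Matrix.det_fin_two]
  simp [LinearMap.toMatrix_apply, L1]

lemma detL2 : LinearMap.det L2 = 1 / 2 := by
  rw [← LinearMap.det_toMatrix (Module.Basis.finTwoProd ℝ) L2, Matrix.det_fin_two]
  simp [LinearMap.toMatrix_apply, L2]

lemma vol_preimage_L1 (s : Set (ℝ × ℝ)) : volume (L1 ⁻¹' s) = 2 * volume s := by
  rw [Measure.addHaar_preimage_linearMap volume (by rw [detL1]; norm_num) s, detL1]
  norm_num

lemma vol_preimage_L2 (s : Set (ℝ × ℝ)) : volume (L2 ⁻¹' s) = 2 * volume s := by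
  rw [Measure.addHaar_preimage_linearMap volume (by rw [detL2]; norm_num) s, detL2]
  norm_num

lemma f1_eq : f1 = fun v => L1 v := rfl

lemma f2_eq : f2 = fun v => L2 v + ((0 : ℝ), (1 : ℝ)) := by
  funext v
  simp [f2, L2, Prod.ext_iff]
  ring

lemma vol_preimage_f1 (s : Set (ℝ × ℝ)) : volume (f1 ⁻¹' s) = 2 * volume s := by
  rw [f1_eq]; exact vol_preimage_L1 s

lemma vol_preimage_f2 (s : Set (ℝ × ℝ)) : volume (f2 ⁻¹' s) = 2 * volume s := by
  rw [f2_eq]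
  have : (fun v => L2 v + ((0 : ℝ), (1 : ℝ))) ⁻¹' s
      = L2 ⁻¹' ((fun p => p + ((0 : ℝ), (1 : ℝ))) ⁻¹' s) := rfl
  rw [this, vol_preimage_L2, measure_preimage_add_right]

/-- Explicit description of the triangle. -/
lemma Δ_eq : Δ = {p : ℝ × ℝ | 0 ≤ p.1 ∧ 0 ≤ p.2 ∧ p.1 + p.2 ≤ 1} := by
  apply Subset.antisymm
  · apply convexHull_min
    · rintro p (rfl | rfl | rfl) <;> norm_num
    · rintro ⟨a, b⟩ ⟨ha1, ha2, ha3⟩ ⟨c, d⟩ ⟨hc1, hc2, hc3⟩ s t hs ht hst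
      simp only [mem_setOf_eq, Prod.fst_add, Prod.snd_add, Prod.smul_fst, Prod.smul_snd,
        smul_eq_mul] at *
      refine ⟨by nlinarith, by nlinarith, by nlinarith⟩
  · rintro ⟨a, b⟩ ⟨ha, hb, hab⟩
    simp only [mem_setOf_eq] at ha hb hab
    have h00 : ((0 : ℝ), (0 : ℝ)) ∈ Δ := subset_convexHull ℝ _ (by simp)
    have h10 : ((1 : ℝ), (0 : ℝ)) ∈ Δ := subset_convexHull ℝ _ (by simp)
    have h01 : ((0 : ℝ), (1 : ℝ)) ∈ Δ := subset_convexHull ℝ _ (by simp)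
    by_cases h : a + b = 0
    · have ha0 : a = 0 := by linarith
      have hb0 : b = 0 := by linarith
      rw [ha0, hb0]; exact h00
    · have ht : 0 < a + b := lt_of_le_of_ne (by linarith) (Ne.symm h)
      have hm : ((a / (a + b), b / (a + b)) : ℝ × ℝ) ∈ Δ := by
        have := (convex_convexHull ℝ {((0:ℝ), (0:ℝ)), (1, 0), (0, 1)}) h10 h01
          (div_nonneg ha ht.le) (div_nonneg hb ht.le)
          (by field_simp)
        convert this using 1
        case e'_4 => rfl
        rw [Prod.ext_iff]
        constructor <;> · simp <;> ring
      have h2 := (convex_convexHull ℝ {((0:ℝ), (0:ℝ)), (1, 0), (0, 1)}) hm h00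
        ht.le (by linarith : (0:ℝ) ≤ 1 - (a + b)) (by ring)
      convert h2 using 1
      case e'_4 => rfl
      rw [Prod.ext_iff]
      constructor <;> · simp <;> field_simp
  
/-- Image triangle of `f1` (lower half of `Δ`). -/
def T1 : Set (ℝ × ℝ) := {p : ℝ × ℝ | 0 ≤ p.2 ∧ p.2 ≤ p.1 ∧ p.1 + p.2 ≤ 1}

/-- Image triangle of `f2` (upper half of `Δ`). -/
def T2 : Set (ℝ × ℝ) := {p : ℝ × ℝ | 0 ≤ p.1 ∧ p.1 ≤ p.2 ∧ p.1 + p.2 ≤ 1}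

lemma preimage_T1 : f1 ⁻¹' T1 = Δ := by
  rw [Δ_eq]; ext ⟨x, y⟩
  simp only [T1, f1, mem_preimage, mem_setOf_eq]
  constructor <;> rintro ⟨h1, h2, h3⟩ <;> refine ⟨by linarith, by linarith, by linarith⟩

lemma preimage_T2 : f2 ⁻¹' T2 = Δ := by
  rw [Δ_eq]; ext ⟨x, y⟩
  simp only [T2, f2, mem_preimage, mem_setOf_eq]
  constructor <;> rintro ⟨h1, h2, h3⟩ <;> refine ⟨by linarith, by linarith, by linarith⟩

lemma T1_union_T2 : T1 ∪ T2 = Δ := by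
  rw [Δ_eq]; ext ⟨x, y⟩
  simp only [T1, T2, mem_union, mem_setOf_eq]
  constructor
  · rintro (⟨h1, h2, h3⟩ | ⟨h1, h2, h3⟩) <;> exact ⟨by linarith, by linarith, by linarith⟩
  · rintro ⟨h1, h2, h3⟩
    rcases le_total y x with h | h
    · exact Or.inl ⟨by linarith, by linarith, by linarith⟩
    · exact Or.inr ⟨by linarith, by linarith, by linarith⟩

lemma measurable_T1 : MeasurableSet T1 := by
  apply IsClosed.measurableSet
  have : T1 = {p : ℝ × ℝ | 0 ≤ p.2} ∩ ({p | p.2 ≤ p.1} ∩ {p | p.1 + p.2 ≤ 1}) := by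
    ext p; simp [T1, and_assoc]
  rw [this]
  exact (isClosed_le continuous_const continuous_snd).inter
    ((isClosed_le continuous_snd continuous_fst).inter
      (isClosed_le (continuous_fst.add continuous_snd) continuous_const))

lemma measurable_T2 : MeasurableSet T2 := by
  apply IsClosed.measurableSet
  have : T2 = {p : ℝ × ℝ | 0 ≤ p.1} ∩ ({p | p.1 ≤ p.2} ∩ {p | p.1 + p.2 ≤ 1}) := by
    ext p; simp [T2, and_assoc]
  rw [this]
  exact (isClosed_le continuous_const continuous_fst).inter
    ((isClosed_le continuous_fst continuous_snd).inter
      (isClosed_le (continuous_fst.add continuous_snd) continuous_const))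

lemma vol_T1_inter_T2 : volume (T1 ∩ T2) = 0 := by
  have hsub : T1 ∩ T2 ⊆ (fun p : ℝ × ℝ => (p.1 - p.2, p.2)) ⁻¹' ({0} ×ˢ univ) := by
    rintro ⟨x, y⟩ ⟨⟨_, h1, _⟩, ⟨_, h2, _⟩⟩
    have : x = y := le_antisymm h2 h1
    simp [this]
  refine measure_mono_null hsub ?_
  have : (fun p : ℝ × ℝ => (p.1 - p.2, p.2)) = fun p => (LinearMap.prod
      ((LinearMap.fst ℝ ℝ ℝ) - (LinearMap.snd ℝ ℝ ℝ)) (LinearMap.snd ℝ ℝ ℝ)) p := rfl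
  rw [this]
  have hdet : LinearMap.det (LinearMap.prod
      ((LinearMap.fst ℝ ℝ ℝ) - (LinearMap.snd ℝ ℝ ℝ)) (LinearMap.snd ℝ ℝ ℝ)) ≠ 0 := by
    rw [← LinearMap.det_toMatrix (Module.Basis.finTwoProd ℝ), Matrix.det_fin_two]
    simp [LinearMap.toMatrix_apply]
  rw [Measure.addHaar_preimage_linearMap volume hdet]
  have : volume (({0} : Set ℝ) ×ˢ (univ : Set ℝ)) = 0 := by
    rw [Measure.volume_eq_prod, Measure.prod_prod]
    simp
  rw [this, mul_zero]

lemma f1_continuous : Continuous f1 := by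
  exact (continuous_fst.add (continuous_snd.div_const 2)).prodMk (continuous_snd.div_const 2)

lemma f2_continuous : Continuous f2 := by
  exact (continuous_snd.div_const 2).prodMk
    ((continuous_const.sub continuous_fst).sub (continuous_snd.div_const 2))

lemma measurable_Δ : MeasurableSet Δ := by
  rw [T1_union_T2.symm]
  exact measurable_T1.union measurable_T2

/-- The normalized Lebesgue measure on `Δ` is invariant for the probabilistic IFS
`((f₁, 1/2), (f₂, 1/2))`: `(1/2)·μ∘f₁⁻¹ + (1/2)·μ∘f₂⁻¹ = μ`. -/
theorem normalized_lebesgue_invariant :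
    (2 : ℝ≥0∞)⁻¹ • μBV.map f1 + (2 : ℝ≥0∞)⁻¹ • μBV.map f2 = μBV := by
  ext s hs
  rw [Measure.add_apply, Measure.smul_apply, Measure.smul_apply, smul_eq_mul, smul_eq_mul,
    Measure.map_apply f1_continuous.measurable hs, Measure.map_apply f2_continuous.measurable hs]
  simp only [μBV, Measure.smul_apply, smul_eq_mul,
    Measure.restrict_apply (f1_continuous.measurable hs),
    Measure.restrict_apply (f2_continuous.measurable hs), Measure.restrict_apply hs]
  have key1 : f1 ⁻¹' s ∩ Δ = f1 ⁻¹' (s ∩ T1) := by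
    rw [preimage_inter, preimage_T1]
  have key2 : f2 ⁻¹' s ∩ Δ = f2 ⁻¹' (s ∩ T2) := by
    rw [preimage_inter, preimage_T2]
  rw [key1, key2, vol_preimage_f1, vol_preimage_f2]
  have hsum : volume (s ∩ T1) + volume (s ∩ T2)
      = volume (s ∩ (T1 ∪ T2)) + volume (s ∩ (T1 ∩ T2)) := by
    have h := measure_union_add_inter (μ := volume) (s ∩ T1)
      (hs.inter measurable_T2)
    rw [← h]
    congr 1
    · congr 1; ext p; simp only [mem_inter_iff, mem_union]; tauto
    · congr 1; ext p; simp only [mem_inter_iff]; tauto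
  have hz : volume (s ∩ (T1 ∩ T2)) = 0 :=
    measure_mono_null inter_subset_right vol_T1_inter_T2
  have : (2 : ℝ≥0∞)⁻¹ * (2 * (2 * volume (s ∩ T1))) + (2 : ℝ≥0∞)⁻¹ * (2 * (2 * volume (s ∩ T2)))
      = 2 * (volume (s ∩ T1) + volume (s ∩ T2)) := by
    rw [mul_add]
    congr 1 <;> · rw [← mul_assoc, ← mul_assoc, ENNReal.inv_mul_cancel (by norm_num) (by norm_num),
      one_mul]
  rw [this, hsum, hz, add_zero, T1_union_T2]
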